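/- Let p = ker(ev_s) ∩ ℂ[M]^W and q = ker(ev_s) ∩ ℂ[M]^{W^s}. Then the inclusion ℂ[M]^W ⊆ ℂ[M]^{W^s} induces an isomorphism of ℂ-algebras between the p-adic completion of ℂ[M]^W and the q-adic completion of ℂ[M]^{W^s}; in other words, the completions of the two invariant rings at the point s coincide. -/

import Mathlib

set_option synthInstance.maxHeartbeats 1000000
set_option maxHeartbeats 2000000

set_option linter.unusedSectionVars false

namespace InvComplAux

variable {R : Type*} [CommRing R] [Algebra ℂ R]
variable {G : Type*} [Group G] [Finite G]

theorem algHom_eq_of_ker {φ ψ : R →ₐ[ℂ] ℂ}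
    (h : RingHom.ker φ.toRingHom = RingHom.ker ψ.toRingHom) : φ = ψ := by
  ext x
  have hx : x - algebraMap ℂ R (φ x) ∈ RingHom.ker φ.toRingHom := by
    simp [RingHom.mem_ker]
  rw [h, RingHom.mem_ker] at hx
  have h2 : ψ x - φ x = 0 := by simpa using hx
  exact (sub_eq_zero.mp h2).symm

theorem comap_pow_equiv (e : R ≃ₐ[ℂ] R) (J : Ideal R) (n : ℕ) :
    (J ^ n).comap e.toAlgHom.toRingHom = (J.comap e.toAlgHom.toRingHom) ^ n := by
  refine le_antisymm ?_ (Ideal.le_comap_pow _ n)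
  intro x hx
  have hx' : e x ∈ J ^ n := hx
  have h1 : e.symm.toAlgHom.toRingHom (e x) ∈
      (J ^ n).map e.symm.toAlgHom.toRingHom := Ideal.mem_map_of_mem _ hx'
  have h2 : x ∈ (J.map e.symm.toAlgHom.toRingHom) ^ n := by
    rw [← Ideal.map_pow]
    simpa using h1
  refine Ideal.pow_right_mono ?_ n h2
  rw [Ideal.map_le_iff_le_comap]
  intro y hy
  simp only [Ideal.mem_comap]
  simpa using hy

theorem mem_of_coe_mem_map (ρ : G →* (R ≃ₐ[ℂ] R)) (C : Subalgebra ℂ R)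
    (hC : ∀ f : R, f ∈ C ↔ ∀ g, ρ g f = f) (J : Ideal C) (a : C)
    (ha : (a : R) ∈ J.map C.val.toRingHom) : a ∈ J := by
  cases nonempty_fintype G
  classical
  have hk0 : ((Fintype.card G : ℂ)) ≠ 0 := Nat.cast_ne_zero.mpr Fintype.card_ne_zero
  set π : R →ₗ[ℂ] R :=
    (Fintype.card G : ℂ)⁻¹ • (∑ g : G, (ρ g).toLinearMap) with hπ
  have hπapp : ∀ x : R, π x = (Fintype.card G : ℂ)⁻¹ • ∑ g : G, ρ g x := by
    intro x; simp [hπ, LinearMap.sum_apply]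
  have hπC : ∀ x : R, π x ∈ C := by
    intro x
    rw [hC]
    intro g'
    rw [hπapp, map_smul, map_sum]
    congr 1
    refine Fintype.sum_equiv (Equiv.mulLeft g') _ _ fun g => ?_
    show ρ g' (ρ g x) = ρ (g' * g) x
    rw [map_mul]
    rfl
  have hπfix : ∀ b : C, π (b : R) = (b : R) := by
    intro b
    have hb : ∀ g, ρ g (b : R) = b := (hC b).mp b.2
    rw [hπapp]
    simp only [hb]
    rw [Finset.sum_const, Finset.card_univ, ← Nat.cast_smul_eq_nsmul ℂ, smul_smul,
      inv_mul_cancel₀ hk0, one_smul]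
  have hπmul : ∀ (x : R) (b : C), π (x * (b : R)) = π x * b := by
    intro x b
    have hb : ∀ g, ρ g (b : R) = b := (hC b).mp b.2
    rw [hπapp, hπapp]
    simp only [map_mul, hb, ← Finset.sum_mul, smul_mul_assoc]
  have ha' : (a : R) ∈ Submodule.span R (C.val.toRingHom '' (J : Set C)) := ha
  rw [Submodule.mem_span_set'] at ha'
  obtain ⟨n, r, gsub, hsum⟩ := ha'
  choose cc hccJ hcc using fun i => (gsub i).2
  have key : (a : R) = C.val (∑ i, (⟨π (r i), hπC (r i)⟩ : C) * cc i) := by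
    calc (a : R) = π (a : R) := (hπfix a).symm
    _ = π (∑ i, r i • ((gsub i : R))) := by rw [hsum]
    _ = ∑ i, π (r i • ((gsub i : R))) := map_sum π _ _
    _ = ∑ i, π (r i * (cc i : R)) := by
        refine Finset.sum_congr rfl fun i _ => ?_
        rw [smul_eq_mul, ← hcc i]
        rfl
    _ = ∑ i, π (r i) * (cc i : R) := Finset.sum_congr rfl fun i _ => hπmul _ _
    _ = C.val (∑ i, (⟨π (r i), hπC (r i)⟩ : C) * cc i) := by
        rw [map_sum]
        rfl
  have haeq : a = ∑ i, (⟨π (r i), hπC (r i)⟩ : C) * cc i := Subtype.ext key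
  rw [haeq]
  exact Ideal.sum_mem _ fun i _ => Ideal.mul_mem_left _ _ (hccJ i)


theorem mem_prod_pow {s : Finset (Ideal R)} (hmax : ∀ J ∈ s, J.IsMaximal) (N : ℕ) (x : R)
    (hx : ∀ J ∈ s, x ∈ J ^ N) : x ∈ ∏ J ∈ s, J ^ N := by
  classical
  induction s using Finset.induction_on with
  | empty => simp
  | @insert J s hJs ih =>
      have hcop : IsCoprime (J ^ N) (∏ K ∈ s, K ^ N) := by
        refine IsCoprime.prod_right fun K hK => IsCoprime.pow ?_
        rw [Ideal.isCoprime_iff_sup_eq]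
        exact Ideal.IsMaximal.coprime_of_ne (hmax J (Finset.mem_insert_self J s))
          (hmax K (Finset.mem_insert_of_mem hK)) (fun h => hJs (h ▸ hK))
      rw [Finset.prod_insert hJs, Ideal.mul_eq_inf_of_coprime
        (Ideal.isCoprime_iff_sup_eq.mp hcop)]
      exact ⟨hx J (Finset.mem_insert_self J s),
        ih (fun K hK => hmax K (Finset.mem_insert_of_mem hK))
          (fun K hK => hx K (Finset.mem_insert_of_mem hK))⟩

theorem pow_ker_contract [IsNoetherianRing R] [IsJacobsonRing R]
    (ρ : G →* (R ≃ₐ[ℂ] R)) (C : Subalgebra ℂ R)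
    (hC : ∀ f : R, f ∈ C ↔ ∀ g, ρ g f = f) (evs : R →ₐ[ℂ] ℂ) :
    ∃ c : ℕ, 0 < c ∧ ∀ (n : ℕ) (a : C),
      (a : R) ∈ (RingHom.ker evs.toRingHom) ^ (c * n) →
      a ∈ ((RingHom.ker evs.toRingHom).comap C.val.toRingHom) ^ n := by
  cases nonempty_fintype G
  classical
  set I : Ideal R := RingHom.ker evs.toRingHom with hI
  -- evs is surjective, as are its twists
  have hsurj : ∀ g : G, Function.Surjective (evs.toRingHom.comp (ρ g).toAlgHom.toRingHom) := by
    intro g z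
    exact ⟨(ρ g).symm (algebraMap ℂ R z), by simp⟩
  set Iw : G → Ideal R := fun g => I.comap (ρ g).toAlgHom.toRingHom with hIwdef
  have hIwker : ∀ g, Iw g = RingHom.ker (evs.toRingHom.comp (ρ g).toAlgHom.toRingHom) := by
    intro g
    rw [hIwdef, hI, ← RingHom.comap_ker]
  have hIwmax : ∀ g, (Iw g).IsMaximal := fun g =>
    (hIwker g) ▸ RingHom.ker_isMaximal_of_surjective _ (hsurj g)
  have hIw1 : Iw 1 = I := by
    have h : (ρ 1).toAlgHom.toRingHom = RingHom.id R := by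
      ext x
      simp [map_one ρ]
    show I.comap (ρ (1 : G)).toAlgHom.toRingHom = I
    rw [h, Ideal.comap_id]
  have hImax : I.IsMaximal := hIw1 ▸ hIwmax 1
  have hmemIw : ∀ (g : G) (x : R), x ∈ Iw g ↔ ρ g x ∈ I := fun g x => Iff.rfl
  have hIwpow : ∀ (g : G) (n : ℕ) (x : R), x ∈ (Iw g) ^ n ↔ ρ g x ∈ I ^ n := by
    intro g n x
    rw [hIwdef, ← comap_pow_equiv (ρ g) I n]
    rfl
  -- the contracted maximal ideal
  set p' : Ideal C := I.comap C.val.toRingHom with hp'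
  have hp'max : p'.IsMaximal := by
    rw [hp', hI, RingHom.comap_ker]
    refine RingHom.ker_isMaximal_of_surjective _ ?_
    intro z
    refine ⟨algebraMap ℂ C z, ?_⟩
    show evs (C.val (algebraMap ℂ C z)) = z
    simp
  set pR : Ideal R := p'.map C.val.toRingHom with hpR
  -- every maximal ideal over pR is one of the Iw g
  have claim1 : ∀ P : Ideal R, P.IsMaximal → pR ≤ P → ∃ g, P = Iw g := by
    intro P hPmax hle
    have hPp : p' ≤ P.comap C.val.toRingHom := Ideal.map_le_iff_le_comap.mp hle
    have hcomap_ne : P.comap C.val.toRingHom ≠ ⊤ := by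
      intro h
      apply hPmax.ne_top
      rw [Ideal.eq_top_iff_one] at h ⊢
      exact h
    have hcomap_eq : P.comap C.val.toRingHom = p' := (hp'max.eq_of_le hcomap_ne hPp).symm
    have hsub : (P : Set R) ⊆ ⋃ g ∈ (Finset.univ : Finset G), ((Iw g : Ideal R) : Set R) := by
      intro x hx
      have hNC : (∏ g : G, ρ g x) ∈ C := by
        rw [hC]
        intro g'
        rw [map_prod]
        refine Fintype.prod_equiv (Equiv.mulLeft g') _ _ fun g => ?_
        show ρ g' (ρ g x) = ρ (g' * g) x
        rw [map_mul]
        rfl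
      have hNP : (∏ g : G, ρ g x) ∈ P := by
        rw [← Finset.mul_prod_erase _ _ (Finset.mem_univ (1 : G))]
        have h1 : ρ 1 x = x := by simp [map_one ρ]
        rw [h1]
        exact Ideal.mul_mem_right _ _ hx
      have hmem : (⟨∏ g : G, ρ g x, hNC⟩ : C) ∈ P.comap C.val.toRingHom := hNP
      rw [hcomap_eq] at hmem
      have hI' : (∏ g : G, ρ g x) ∈ I := hmem
      have := (Ideal.IsPrime.prod_mem_iff (hp := hImax.isPrime)).mp hI'
      obtain ⟨g, -, hg⟩ := this
      exact Set.mem_biUnion (Finset.mem_univ g) (show x ∈ Iw g from hg)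
    have := (Ideal.subset_union_prime 1 1 (fun g _ _ _ => (hIwmax g).isPrime)).mp hsub
    obtain ⟨g, -, hPle⟩ := this
    exact ⟨g, hPmax.eq_of_le (hIwmax g).isPrime.ne_top hPle⟩
  -- the product of the distinct conjugate maximal ideals
  set T : Finset (Ideal R) := Finset.univ.image Iw with hT
  set Jp : Ideal R := ∏ J ∈ T, J with hJp
  have hJp_rad : Jp ≤ pR.radical := by
    rw [Ideal.radical_eq_jacobson, Ideal.jacobson]
    refine le_sInf ?_
    rintro P ⟨hlep, hPmax⟩
    obtain ⟨g, rfl⟩ := claim1 P hPmax hlep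
    have hmem : Iw g ∈ T := Finset.mem_image_of_mem Iw (Finset.mem_univ g)
    calc Jp = Iw g * ∏ J ∈ T.erase (Iw g), J :=
            (Finset.mul_prod_erase T (fun J => J) hmem).symm
      _ ≤ Iw g := Ideal.mul_le_left
  obtain ⟨c₁, hc₁⟩ := Ideal.exists_radical_pow_le_of_fg pR (IsNoetherian.noetherian _)
  refine ⟨max c₁ 1, lt_max_iff.mpr (Or.inr one_pos), ?_⟩
  intro n a ha
  set c : ℕ := max c₁ 1
  have hinv : ∀ g, ρ g (a : R) = a := (hC a).mp a.2
  have h1 : ∀ J ∈ T, (a : R) ∈ J ^ (c * n) := by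
    rintro J hJ
    obtain ⟨g, -, rfl⟩ := Finset.mem_image.mp hJ
    rw [hIwpow, hinv]
    exact ha
  have h2 : (a : R) ∈ ∏ J ∈ T, J ^ (c * n) :=
    mem_prod_pow (fun J hJ => by
      obtain ⟨g, -, rfl⟩ := Finset.mem_image.mp hJ; exact hIwmax g) _ _ h1
  have h3 : (a : R) ∈ Jp ^ (c * n) := by
    rwa [hJp, ← Finset.prod_pow]
  have h4 : Jp ^ (c * n) ≤ pR ^ n := by
    rw [pow_mul]
    refine Ideal.pow_right_mono ?_ n
    calc Jp ^ c ≤ Jp ^ c₁ := Ideal.pow_le_pow_right (le_max_left _ _)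
      _ ≤ pR.radical ^ c₁ := Ideal.pow_right_mono hJp_rad _
      _ ≤ pR := hc₁
  have h5 : (a : R) ∈ (p' ^ n).map C.val.toRingHom := by
    rw [Ideal.map_pow]
    exact h4 h3
  exact mem_of_coe_mem_map ρ C hC (p' ^ n) a h5


theorem approx_invariant (ρ : G →* (R ≃ₐ[ℂ] R)) (A B : Subalgebra ℂ R)
    (hA : ∀ f : R, f ∈ A ↔ ∀ g, ρ g f = f) (evs : R →ₐ[ℂ] ℂ)
    (hB : ∀ f : R, f ∈ B ↔ ∀ g, evs.comp (ρ g).toAlgHom = evs → ρ g f = f)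
    (n : ℕ) (b : R) (hb : b ∈ B) :
    ∃ a ∈ A, b - a ∈ (RingHom.ker evs.toRingHom) ^ n := by
  cases nonempty_fintype G
  classical
  set I : Ideal R := RingHom.ker evs.toRingHom with hI
  set Iw : G → Ideal R := fun g => I.comap (ρ g).toAlgHom.toRingHom with hIwdef
  have hsurj : ∀ g : G, Function.Surjective (evs.toRingHom.comp (ρ g).toAlgHom.toRingHom) := by
    intro g z
    exact ⟨(ρ g).symm (algebraMap ℂ R z), by simp⟩
  have hIwker : ∀ g, Iw g = RingHom.ker (evs.toRingHom.comp (ρ g).toAlgHom.toRingHom) := by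
    intro g
    rw [hIwdef, hI, ← RingHom.comap_ker]
  have hIwmax : ∀ g, (Iw g).IsMaximal := fun g =>
    (hIwker g) ▸ RingHom.ker_isMaximal_of_surjective _ (hsurj g)
  have hIw1 : Iw 1 = I := by
    have h : (ρ 1).toAlgHom.toRingHom = RingHom.id R := by
      ext x
      simp [map_one ρ]
    show I.comap (ρ (1 : G)).toAlgHom.toRingHom = I
    rw [h, Ideal.comap_id]
  have hImax : I.IsMaximal := hIw1 ▸ hIwmax 1
  have hIwpow : ∀ (g : G) (m : ℕ) (x : R), x ∈ (Iw g) ^ m ↔ ρ g x ∈ I ^ m := by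
    intro g m x
    rw [hIwdef, ← comap_pow_equiv (ρ g) I m]
    rfl
  set Pg : G → Prop := fun g => evs.comp (ρ g).toAlgHom = evs with hPgdef
  have hPg_iff : ∀ g, Pg g ↔ Iw g = I := by
    intro g
    constructor
    · intro h
      rw [hIwker g, hI]
      have : evs.toRingHom.comp (ρ g).toAlgHom.toRingHom = (evs.comp (ρ g).toAlgHom).toRingHom :=
        rfl
      rw [this, h]
    · intro h
      refine algHom_eq_of_ker (φ := evs.comp (ρ g).toAlgHom) (ψ := evs) ?_
      have h1 : RingHom.ker (evs.comp (ρ g).toAlgHom).toRingHom = Iw g := (hIwker g).symm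
      rw [h1, h, hI]
  have hPg1 : Pg 1 := by
    rw [hPgdef]
    ext x
    simp [map_one ρ]
  set S : Finset G := Finset.univ.filter (fun g => ¬ Pg g) with hS
  -- construct the CRT element e
  have hcop : IsCoprime (I ^ n) (∏ g ∈ S, (Iw g) ^ n) := by
    refine IsCoprime.prod_right fun g hg => IsCoprime.pow ?_
    rw [Ideal.isCoprime_iff_sup_eq]
    refine Ideal.IsMaximal.coprime_of_ne hImax (hIwmax g) ?_
    intro h
    have : ¬ Pg g := (Finset.mem_filter.mp hg).2
    exact this ((hPg_iff g).mpr h.symm)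
  obtain ⟨u, hu, e, he, hue⟩ := Ideal.isCoprime_iff_exists.mp hcop
  have heIw : ∀ g ∈ S, e ∈ (Iw g) ^ n := by
    intro g hg
    have hle : (∏ g' ∈ S, (Iw g') ^ n) ≤ (Iw g) ^ n := by
      calc (∏ g' ∈ S, (Iw g') ^ n)
          = (Iw g) ^ n * ∏ g' ∈ S.erase g, (Iw g') ^ n :=
            (Finset.mul_prod_erase S (fun g' => (Iw g') ^ n) hg).symm
        _ ≤ (Iw g) ^ n := Ideal.mul_le_left
    exact hle he
  set c : R := b * e with hc
  have hcb : c - b ∈ I ^ n := by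
    have : c - b = -(b * u) := by
      rw [hc]
      have : e = 1 - u := by linear_combination hue
      rw [this]
      ring
    rw [this]
    exact neg_mem (Ideal.mul_mem_left _ _ hu)
  have hcIw : ∀ g ∈ S, c ∈ (Iw g) ^ n := fun g hg => Ideal.mul_mem_left _ _ (heIw g hg)
  -- the average
  set k : ℕ := (Finset.univ.filter Pg).card with hk
  have hk0 : (k : ℂ) ≠ 0 := by
    refine Nat.cast_ne_zero.mpr ?_
    refine Finset.card_ne_zero_of_mem (a := (1 : G)) ?_
    exact Finset.mem_filter.mpr ⟨Finset.mem_univ _, hPg1⟩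
  set a : R := (k : ℂ)⁻¹ • ∑ g : G, ρ g c with ha
  refine ⟨a, ?_, ?_⟩
  · rw [hA]
    intro g'
    rw [ha, map_smul, map_sum]
    congr 1
    refine Fintype.sum_equiv (Equiv.mulLeft g') _ _ fun g => ?_
    show ρ g' (ρ g c) = ρ (g' * g) c
    rw [map_mul ρ g' g]
    rfl
  · -- b - a ∈ I ^ n
    have hsmul : ∀ (z : ℂ) (x : R), x ∈ I ^ n → z • x ∈ I ^ n := by
      intro z x hx
      rw [Algebra.smul_def]
      exact Ideal.mul_mem_left _ _ hx
    have hterm1 : ∀ g ∈ Finset.univ.filter Pg, b - ρ g c ∈ I ^ n := by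
      intro g hg
      have hPgg : Pg g := (Finset.mem_filter.mp hg).2
      have hgb : ρ g b = b := (hB b).mp hb g hPgg
      have h1 : ρ g (c - b) ∈ I ^ n := by
        rw [← hIwpow g n (c - b), (hPg_iff g).mp hPgg]
        exact hcb
      have : b - ρ g c = -(ρ g (c - b)) := by
        rw [map_sub, hgb]
        ring
      rw [this]
      exact neg_mem h1
    have hterm2 : ∀ g ∈ S, ρ g c ∈ I ^ n := by
      intro g hg
      rw [← hIwpow]
      exact hcIw g hg
    have hsum : (k : ℂ) • b - ∑ g : G, ρ g c ∈ I ^ n := by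
      have hsplit : ∑ g : G, ρ g c
          = ∑ g ∈ Finset.univ.filter Pg, ρ g c + ∑ g ∈ S, ρ g c := by
        rw [hS]
        exact (Finset.sum_filter_add_sum_filter_not _ _ _).symm
      have hkb : (k : ℂ) • b = ∑ _g ∈ Finset.univ.filter Pg, b := by
        rw [Finset.sum_const, hk, ← Nat.cast_smul_eq_nsmul ℂ]
      rw [hsplit, hkb]
      have h1 : ∑ _g ∈ Finset.univ.filter Pg, b - ∑ g ∈ Finset.univ.filter Pg, ρ g c
          = ∑ g ∈ Finset.univ.filter Pg, (b - ρ g c) := (Finset.sum_sub_distrib _ _).symm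
      have : (∑ _g ∈ Finset.univ.filter Pg, b) -
          (∑ g ∈ Finset.univ.filter Pg, ρ g c + ∑ g ∈ S, ρ g c)
          = (∑ g ∈ Finset.univ.filter Pg, (b - ρ g c)) - ∑ g ∈ S, ρ g c := by
        rw [← h1]
        ring
      rw [this]
      refine sub_mem (Ideal.sum_mem _ hterm1) (Ideal.sum_mem _ hterm2)
    have : b - a = (k : ℂ)⁻¹ • ((k : ℂ) • b - ∑ g : G, ρ g c) := by
      rw [ha, smul_sub, smul_smul, inv_mul_cancel₀ hk0, one_smul]
    rw [this]
    exact hsmul _ _ hsum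


theorem AdicCompletion.transitionMap_mk {A : Type*} [CommRing A] (p : Ideal A) (M' : Type*) [AddCommGroup M'] [Module A M'] {m n : ℕ}
    (hmn : m ≤ n) (x : M') :
    AdicCompletion.transitionMap p M' hmn (Submodule.Quotient.mk x) =
      Submodule.Quotient.mk x := rfl

theorem of_eq_algebraMap {A : Type*} [CommRing A] (p : Ideal A) (a : A) :
    algebraMap A (AdicCompletion p A) a = AdicCompletion.of p A a := rfl

theorem completion_ringEquiv {A B : Type*} [CommRing A] [CommRing B]
    (f : A →+* B) (p : Ideal A) (q : Ideal B) (c : ℕ) (hc : 0 < c)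
    (hmap : ∀ (n : ℕ) (a : A), a ∈ p ^ n → f a ∈ q ^ n)
    (hinj : ∀ (n : ℕ) (a : A), f a ∈ q ^ (c * n) → a ∈ p ^ n)
    (hsur : ∀ (n : ℕ) (b : B), ∃ a : A, f a - b ∈ q ^ n) :
    ∃ Φ : AdicCompletion p A ≃+* AdicCompletion q B,
      ∀ a : A, Φ (AdicCompletion.of p A a) = AdicCompletion.of q B (f a) := by
  have hsmulA : ∀ m : ℕ, (p ^ m • ⊤ : Ideal A) = p ^ m := fun m => by
    rw [Ideal.smul_eq_mul, Ideal.mul_top]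
  have hsmulB : ∀ m : ℕ, (q ^ m • ⊤ : Ideal B) = q ^ m := fun m => by
    rw [Ideal.smul_eq_mul, Ideal.mul_top]
  have hle_comap : ∀ n : ℕ, (p ^ n • ⊤ : Ideal A) ≤
      ((q ^ n • ⊤ : Ideal B)).comap f := by
    intro n a ha
    rw [hsmulA n] at ha
    show f a ∈ (q ^ n • ⊤ : Ideal B)
    rw [hsmulB n]
    exact hmap n a ha
  let φ : ∀ n : ℕ, (A ⧸ (p ^ n • ⊤ : Ideal A)) →+* (B ⧸ (q ^ n • ⊤ : Ideal B)) :=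
    fun n => Ideal.quotientMap _ f (hle_comap n)
  have hφmk : ∀ (n : ℕ) (r : A), φ n (Submodule.Quotient.mk r)
      = Submodule.Quotient.mk (f r) := fun n r => Ideal.quotientMap_mk
  have hcompat : ∀ (x : AdicCompletion p A) {m n : ℕ} (hmn : m ≤ n),
      AdicCompletion.transitionMap q B hmn (φ n (x.val n)) = φ m (x.val m) := by
    intro x m n hmn
    obtain ⟨r, hr⟩ := Submodule.Quotient.mk_surjective _ (x.val n)
    have hxm : x.val m = Submodule.Quotient.mk r := by
      rw [← x.property hmn, ← hr, AdicCompletion.transitionMap_mk]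
    rw [← hr, hxm, hφmk, hφmk, AdicCompletion.transitionMap_mk]
  let Φf : AdicCompletion p A → AdicCompletion q B :=
    fun x => ⟨fun n => φ n (x.val n), fun {m n} hmn => hcompat x hmn⟩
  have hΦf : ∀ (x : AdicCompletion p A) (n : ℕ), (Φf x).val n = φ n (x.val n) :=
    fun _ _ => rfl
  let Φ : AdicCompletion p A →+* AdicCompletion q B :=
    { toFun := Φf
      map_one' := Subtype.ext (funext fun n => by
        rw [hΦf, AdicCompletion.val_one, map_one, AdicCompletion.val_one])
      map_mul' := fun x y => Subtype.ext (funext fun n => by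
        rw [hΦf, AdicCompletion.val_mul, map_mul, AdicCompletion.val_mul, hΦf, hΦf])
      map_zero' := Subtype.ext (funext fun n => by
        rw [hΦf, AdicCompletion.val_zero_apply, map_zero, AdicCompletion.val_zero_apply])
      map_add' := fun x y => Subtype.ext (funext fun n => by
        rw [hΦf, AdicCompletion.val_add_apply, map_add, AdicCompletion.val_add_apply, hΦf, hΦf]) }
  have hΦval : ∀ (x : AdicCompletion p A) (n : ℕ), (Φ x).val n = φ n (x.val n) :=
    fun _ _ => rfl
  have hinjΦ : Function.Injective Φ := by
    rw [injective_iff_map_eq_zero]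
    intro x hx
    apply Subtype.ext
    funext n
    show x.val n = (0 : AdicCompletion p A).val n
    rw [AdicCompletion.val_zero_apply]
    obtain ⟨r, hr⟩ := Submodule.Quotient.mk_surjective _ (x.val (c * n))
    have hle : n ≤ c * n := Nat.le_mul_of_pos_left n hc
    have hxn : x.val n = Submodule.Quotient.mk r := by
      rw [← x.property hle, ← hr, AdicCompletion.transitionMap_mk]
    have hΦ0 : φ (c * n) (x.val (c * n)) = 0 := by
      have h0 := congrFun (congrArg Subtype.val hx) (c * n)
      exact h0
    rw [← hr, hφmk] at hΦ0
    have h2 : f r ∈ (q ^ (c * n) • ⊤ : Ideal B) :=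
      (Submodule.Quotient.mk_eq_zero _).mp hΦ0
    rw [hsmulB] at h2
    have h4 : r ∈ p ^ n := hinj n r h2
    rw [hxn, Submodule.Quotient.mk_eq_zero, hsmulA]
    exact h4
  have hsurjΦ : Function.Surjective Φ := by
    intro y
    have hbex : ∀ n : ℕ, ∃ b : B, Submodule.Quotient.mk b = y.val (c * n) :=
      fun n => Submodule.Quotient.mk_surjective _ _
    choose bb hbb using hbex
    have haex : ∀ n : ℕ, ∃ a : A, f a - bb n ∈ q ^ (c * n) :=
      fun n => hsur (c * n) (bb n)
    choose aa haad using haex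
    have hbdiff : ∀ {m n : ℕ}, m ≤ n → (bb n - bb m) ∈ q ^ (c * m) := by
      intro m n hmn
      have hle : c * m ≤ c * n := Nat.mul_le_mul_left _ hmn
      have h1 : (Submodule.Quotient.mk (bb n) : B ⧸ (q ^ (c * m) • ⊤ : Ideal B))
          = Submodule.Quotient.mk (bb m) := by
        calc (Submodule.Quotient.mk (bb n) : B ⧸ (q ^ (c * m) • ⊤ : Ideal B))
            = AdicCompletion.transitionMap q B hle (Submodule.Quotient.mk (bb n)) :=
              (AdicCompletion.transitionMap_mk q B hle _).symm
          _ = AdicCompletion.transitionMap q B hle (y.val (c * n)) := by rw [hbb]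
          _ = y.val (c * m) := y.property hle
          _ = Submodule.Quotient.mk (bb m) := (hbb m).symm
      have h2 : bb n - bb m ∈ (q ^ (c * m) • ⊤ : Ideal B) :=
        (Submodule.Quotient.eq _).mp h1
      rwa [hsmulB] at h2
    have hadiff : ∀ {m n : ℕ}, m ≤ n → aa n - aa m ∈ p ^ m := by
      intro m n hmn
      apply hinj
      have hle : c * m ≤ c * n := Nat.mul_le_mul_left _ hmn
      have h1 : f (aa n - aa m)
          = (f (aa n) - bb n) + (bb n - bb m) + (bb m - f (aa m)) := by
        rw [map_sub]
        ring
      rw [h1]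
      have e1 : f (aa n) - bb n ∈ q ^ (c * m) :=
        Ideal.pow_le_pow_right hle (haad n)
      have e2 := hbdiff hmn
      have e3 : bb m - f (aa m) ∈ q ^ (c * m) := by
        have h2 : bb m - f (aa m) = -(f (aa m) - bb m) := by ring
        rw [h2]
        exact neg_mem (haad m)
      exact add_mem (add_mem e1 e2) e3
    refine ⟨⟨fun n => Submodule.Quotient.mk (aa n), ?_⟩, ?_⟩
    · intro m n hmn
      rw [AdicCompletion.transitionMap_mk]
      refine (Submodule.Quotient.eq _).mpr ?_
      rw [hsmulA]
      exact hadiff hmn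
    · apply Subtype.ext
      funext n
      show φ n (Submodule.Quotient.mk (aa n)) = y.val n
      rw [hφmk]
      have hle : n ≤ c * n := Nat.le_mul_of_pos_left n hc
      have h2 : y.val n = Submodule.Quotient.mk (bb n) := by
        rw [← y.property hle, ← hbb n, AdicCompletion.transitionMap_mk]
      rw [h2]
      refine (Submodule.Quotient.eq _).mpr ?_
      rw [hsmulB]
      exact Ideal.pow_le_pow_right hle (haad n)
  refine ⟨RingEquiv.ofBijective Φ ⟨hinjΦ, hsurjΦ⟩, ?_⟩
  intro a
  show Φ (AdicCompletion.of p A a) = AdicCompletion.of q B (f a)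
  apply Subtype.ext
  funext n
  rw [hΦval, AdicCompletion.of_apply, AdicCompletion.of_apply,
    Submodule.mkQ_apply, Submodule.mkQ_apply]
  exact hφmk n a


end InvComplAux

/-- The inclusion `ℂ[M]^W ⊆ ℂ[M]^{W^s}` induces an isomorphism of ℂ-algebras between
the completion of `ℂ[M]^W` at the prime `p = ker(ev_s) ∩ ℂ[M]^W` and the completion of
`ℂ[M]^{W^s}` at the prime `q = ker(ev_s) ∩ ℂ[M]^{W^s}`: the completions of the two
invariant rings at the point `s` coincide. -/
theorem invariants_completions_agree_at_point
    -- M: a finitely generated free abelian group (written multiplicatively)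
    (M : Type*) [CommGroup M] [Module.Free ℤ (Additive M)] [Module.Finite ℤ (Additive M)]
    -- the point s, a homomorphism M →* ℂˣ
    (s : M →* ℂˣ)
    -- W: a finite group acting on M by group automorphisms
    (W : Type*) [Group W] [Finite W] [MulDistribMulAction W M]
    -- ev_s : ℂ[M] → ℂ, the evaluation at s (e^λ ↦ s(λ))
    (evs : MonoidAlgebra ℂ M →ₐ[ℂ] ℂ)
    (hevs : ∀ m : M, evs (MonoidAlgebra.of ℂ M m) = s m)
    -- A = ℂ[M]^W and B = ℂ[M]^{W^s}, where W^s is the stabilizer of s in W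
    (A B : Subalgebra ℂ (MonoidAlgebra ℂ M))
    (hA : ∀ f : MonoidAlgebra ℂ M,
      f ∈ A ↔ ∀ (w : W) (m : M), f.coeff (w • m) = f.coeff m)
    (hB : ∀ f : MonoidAlgebra ℂ M,
      f ∈ B ↔ ∀ w : W, (∀ m : M, s (w • m) = s m) → ∀ m : M, f.coeff (w • m) = f.coeff m)
    (hAB : A ≤ B)
    -- the primes p = ker(ev_s) ∩ A and q = ker(ev_s) ∩ B
    (p : Ideal A) (q : Ideal B)
    (hp : p = (RingHom.ker evs.toRingHom).comap A.val.toRingHom)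
    (hq : q = (RingHom.ker evs.toRingHom).comap B.val.toRingHom) :
    -- the inclusion induces a ℂ-algebra isomorphism of the adic completions
    letI : Algebra ℂ (AdicCompletion p A) :=
      ((algebraMap A (AdicCompletion p A)).comp (algebraMap ℂ A)).toAlgebra
    letI : Algebra ℂ (AdicCompletion q B) :=
      ((algebraMap B (AdicCompletion q B)).comp (algebraMap ℂ B)).toAlgebra
    ∃ e : AdicCompletion p A ≃ₐ[ℂ] AdicCompletion q B,
      ∀ a : A, e (AdicCompletion.of p A a) =
        AdicCompletion.of q B (Subalgebra.inclusion hAB a) := by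
  classical
  -- R is a Noetherian Jacobson ring
  haveI hMfg : Monoid.FG M := Monoid.fg_iff_add_fg.mpr
    (AddGroup.fg_iff_addMonoid_fg.mp (Module.Finite.iff_addGroup_fg.mp ‹_›))
  haveI : IsNoetherianRing (MonoidAlgebra ℂ M) :=
    Algebra.FiniteType.isNoetherianRing ℂ (MonoidAlgebra ℂ M)
  haveI : IsJacobsonRing (MonoidAlgebra ℂ M) := by
    obtain ⟨n, f, hf⟩ := Algebra.FiniteType.iff_quotient_mvPolynomial''.mp
      (inferInstance : Algebra.FiniteType ℂ (MonoidAlgebra ℂ M))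
    exact isJacobsonRing_of_surjective ⟨f.toRingHom, hf⟩
  -- the action of W on the monoid algebra
  have hmapmul : ∀ (w₁ w₂ : W),
      MonoidAlgebra.domCongr ℂ ℂ (MulDistribMulAction.toMulAut W M (w₁ * w₂))
      = MonoidAlgebra.domCongr ℂ ℂ (MulDistribMulAction.toMulAut W M w₁) *
        MonoidAlgebra.domCongr ℂ ℂ (MulDistribMulAction.toMulAut W M w₂) := by
    intro w₁ w₂
    apply AlgEquiv.ext
    intro f
    apply MonoidAlgebra.ext
    apply Finsupp.ext
    intro m
    rw [AlgEquiv.mul_apply, MonoidAlgebra.coeff_domCongr]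
    rw [MonoidAlgebra.domCongr_apply, MonoidAlgebra.domCongr_apply]
    congr 1
    simp [MulDistribMulAction.toMulAut, mul_smul]
  let ρ : W →* (MonoidAlgebra ℂ M ≃ₐ[ℂ] MonoidAlgebra ℂ M) :=
    { toFun := fun w => MonoidAlgebra.domCongr ℂ ℂ (MulDistribMulAction.toMulAut W M w)
      map_one' := by
        show MonoidAlgebra.domCongr ℂ ℂ (MulDistribMulAction.toMulAut W M 1) = 1
        rw [map_one]
        exact MonoidAlgebra.domCongr_refl
      map_mul' := hmapmul }
  have hρapp : ∀ (w : W) (f : MonoidAlgebra ℂ M) (m : M), (ρ w f).coeff m = f.coeff (w⁻¹ • m) := by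
    intro w f m
    show (MonoidAlgebra.domCongr ℂ ℂ (MulDistribMulAction.toMulAut W M w) f).coeff m = _
    rw [MonoidAlgebra.domCongr_apply]
    rfl
  have hfix_iff : ∀ (w : W) (f : MonoidAlgebra ℂ M),
      ρ w f = f ↔ ∀ m, f.coeff (w • m) = f.coeff m := by
    intro w f
    constructor
    · intro h m
      have h2 : (ρ w f).coeff (w • m) = f.coeff (w • m) := by rw [h]
      rw [hρapp, inv_smul_smul] at h2
      exact h2.symm
    · intro h
      apply MonoidAlgebra.ext
      apply Finsupp.ext
      intro m
      rw [hρapp]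
      have h2 := h (w⁻¹ • m)
      rw [smul_inv_smul] at h2
      exact h2.symm
  have hA' : ∀ f, f ∈ A ↔ ∀ w : W, ρ w f = f := by
    intro f
    rw [hA f]
    constructor
    · intro h w
      exact (hfix_iff w f).mpr (h w)
    · intro h w m
      exact (hfix_iff w f).mp (h w) m
  have hof : ∀ (w : W) (m : M),
      ρ w (MonoidAlgebra.of ℂ M m) = MonoidAlgebra.of ℂ M (w • m) := by
    intro w m
    show MonoidAlgebra.domCongr ℂ ℂ (MulDistribMulAction.toMulAut W M w)
        (MonoidAlgebra.single m 1) = MonoidAlgebra.single (w • m) 1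
    rw [MonoidAlgebra.domCongr_single]
    congr 1
  have hPg_char : ∀ w : W,
      (evs.comp (ρ w).toAlgHom = evs) ↔ ∀ m, s (w • m) = s m := by
    intro w
    constructor
    · intro h m
      have h2 := DFunLike.congr_fun h (MonoidAlgebra.of ℂ M m)
      have h3 : evs (ρ w (MonoidAlgebra.of ℂ M m)) = evs (MonoidAlgebra.of ℂ M m) := h2
      rw [hof, hevs, hevs] at h3
      exact Units.ext h3
    · intro h
      apply MonoidAlgebra.algHom_ext
      intro m
      show evs (ρ w (MonoidAlgebra.of ℂ M m)) = evs (MonoidAlgebra.of ℂ M m)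
      rw [hof, hevs, hevs]
      exact_mod_cast congrArg Units.val (h m)
      exact Subsingleton.elim _ _
  have hB' : ∀ f, f ∈ B ↔ ∀ w : W, evs.comp (ρ w).toAlgHom = evs → ρ w f = f := by
    intro f
    rw [hB f]
    constructor
    · intro h w hw
      exact (hfix_iff w f).mpr (h w ((hPg_char w).mp hw))
    · intro h w hw m
      exact (hfix_iff w f).mp (h w ((hPg_char w).mpr hw)) m
  -- the stabilizer subgroup
  have hcomp : ∀ x y : W,
      (ρ (x * y)).toAlgHom = (ρ x).toAlgHom.comp (ρ y).toAlgHom := by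
    intro x y
    rw [map_mul]
    exact DFunLike.ext _ _ fun z => rfl
  let Ws : Subgroup W :=
    { carrier := {w | evs.comp (ρ w).toAlgHom = evs}
      one_mem' := by
        show evs.comp (ρ 1).toAlgHom = evs
        rw [map_one]
        exact DFunLike.ext _ _ fun z => rfl
      mul_mem' := by
        intro x y hx hy
        show evs.comp (ρ (x * y)).toAlgHom = evs
        rw [hcomp, ← AlgHom.comp_assoc, hx, hy]
      inv_mem' := by
        intro x hx
        show evs.comp (ρ x⁻¹).toAlgHom = evs
        have h2 : evs.comp (ρ x⁻¹).toAlgHom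
            = (evs.comp (ρ x).toAlgHom).comp (ρ x⁻¹).toAlgHom := by rw [hx]
        rw [h2, AlgHom.comp_assoc, ← hcomp, mul_inv_cancel, map_one]
        exact DFunLike.ext _ _ fun z => rfl }
  have hC_B : ∀ f, f ∈ B ↔ ∀ g : Ws, (ρ.comp Ws.subtype) g f = f := by
    intro f
    rw [hB' f]
    constructor
    · intro h g
      exact h g g.2
    · intro h w hw
      exact h ⟨w, hw⟩
  set I : Ideal (MonoidAlgebra ℂ M) := RingHom.ker evs.toRingHom with hI
  obtain ⟨c₁, hc₁, hinj₁⟩ := InvComplAux.pow_ker_contract ρ A hA' evs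
  obtain ⟨c₂, hc₂, hinj₂⟩ := InvComplAux.pow_ker_contract (ρ.comp Ws.subtype) B hC_B evs
  have star := InvComplAux.approx_invariant ρ A B hA' evs hB'
  -- membership transfers
  have hinjA : ∀ (n : ℕ) (a : A), (a : MonoidAlgebra ℂ M) ∈ I ^ (c₁ * n) → a ∈ p ^ n := by
    intro n a ha
    have h1 := hinj₁ n a ha
    rwa [← hp] at h1
  have hinjB : ∀ (n : ℕ) (b : B), (b : MonoidAlgebra ℂ M) ∈ I ^ (c₂ * n) → b ∈ q ^ n := by
    intro n b hb
    have h1 := hinj₂ n b hb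
    rwa [← hq] at h1
  have hBI : ∀ (m : ℕ) (b : B), b ∈ q ^ m → (b : MonoidAlgebra ℂ M) ∈ I ^ m := by
    intro m b hbm
    have h1 : b ∈ (I.comap B.val.toRingHom) ^ m := by rwa [hq] at hbm
    exact Ideal.le_comap_pow _ m h1
  have hpq_pow : ∀ (m : ℕ) (a : A), a ∈ p ^ m →
      (Subalgebra.inclusion hAB).toRingHom a ∈ q ^ m := by
    have hpq : p ≤ q.comap (Subalgebra.inclusion hAB).toRingHom := by
      intro a hap
      have h1 : (a : MonoidAlgebra ℂ M) ∈ I := by rw [hp] at hap; exact hap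
      show Subalgebra.inclusion hAB a ∈ q
      rw [hq]
      show B.val.toRingHom (Subalgebra.inclusion hAB a) ∈ I
      have h2 : (B.val.toRingHom (Subalgebra.inclusion hAB a) : MonoidAlgebra ℂ M)
          = (a : MonoidAlgebra ℂ M) := Subalgebra.coe_inclusion hAB a
      rwa [h2]
    intro m a ha
    exact Ideal.le_comap_pow _ m ((Ideal.pow_right_mono hpq m) ha)
  have hinjf : ∀ (n : ℕ) (a : A),
      (Subalgebra.inclusion hAB).toRingHom a ∈ q ^ (c₁ * n) → a ∈ p ^ n := by
    intro n a ha
    have h1 := hBI _ _ ha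
    have h2 : (((Subalgebra.inclusion hAB).toRingHom a : B) : MonoidAlgebra ℂ M)
        = (a : MonoidAlgebra ℂ M) := Subalgebra.coe_inclusion hAB a
    rw [h2] at h1
    exact hinjA n a h1
  have hsurf : ∀ (n : ℕ) (b : B),
      ∃ a : A, (Subalgebra.inclusion hAB).toRingHom a - b ∈ q ^ n := by
    intro n b
    obtain ⟨a, haA, hd⟩ := star (c₂ * n) (b : MonoidAlgebra ℂ M) b.2
    refine ⟨⟨a, haA⟩, ?_⟩
    refine hinjB n _ ?_
    have h1 : (((Subalgebra.inclusion hAB).toRingHom (⟨a, haA⟩ : A) - b : B) :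
        MonoidAlgebra ℂ M) = -((b : MonoidAlgebra ℂ M) - a) := by
      show ((Subalgebra.inclusion hAB).toRingHom (⟨a, haA⟩ : A) : MonoidAlgebra ℂ M)
          - (b : MonoidAlgebra ℂ M) = _
      have h2 : (((Subalgebra.inclusion hAB).toRingHom (⟨a, haA⟩ : A) : B) :
          MonoidAlgebra ℂ M) = a := Subalgebra.coe_inclusion hAB _
      rw [h2]
      ring
    rw [h1]
    exact neg_mem hd
  obtain ⟨Φ, hΦ⟩ := InvComplAux.completion_ringEquiv
    (Subalgebra.inclusion hAB).toRingHom p q c₁ hc₁ hpq_pow hinjf hsurf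
  letI algA : Algebra ℂ (AdicCompletion p A) :=
    ((algebraMap A (AdicCompletion p A)).comp (algebraMap ℂ A)).toAlgebra
  letI algB : Algebra ℂ (AdicCompletion q B) :=
    ((algebraMap B (AdicCompletion q B)).comp (algebraMap ℂ B)).toAlgebra
  have hcommutes : ∀ z : ℂ,
      Φ (algebraMap ℂ (AdicCompletion p A) z) = algebraMap ℂ (AdicCompletion q B) z := by
    intro z
    rw [RingHom.algebraMap_toAlgebra, RingHom.algebraMap_toAlgebra]
    show Φ (algebraMap A (AdicCompletion p A) (algebraMap ℂ A z))
        = algebraMap B (AdicCompletion q B) (algebraMap ℂ B z)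
    rw [InvComplAux.of_eq_algebraMap, InvComplAux.of_eq_algebraMap, hΦ]
    congr 1
  exact ⟨AlgEquiv.ofRingEquiv hcommutes, fun a => hΦ a⟩
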